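/- arXiv:2107.03574 — 2 statements merged into one kernel-verified Lean document; each statement's English description precedes it below -/
import Mathlib

section
/- Let p be a prime with p ≡ 3 (mod 4) and let g^2 and G = ∑_{t=0}^{2p-1} g^2_t·4^t be as in the Kim et al. construction (g^2_t = φ(b_t, c_t) for even t and φ(b_t, 1-c_t) for odd t, indices mod p). Then gcd(G, 4^p + 1) = 5 if 5 divides p - 2, and 1 otherwise. -/
/-- The Legendre sequence `b` of period `p`. -/
def legb (p : ℕ) [Fact p.Prime] (t : ℕ) : ℤ :=
  if (t : ZMod p) = 0 then 0 else (1 - legendreSym p (t : ℤ)) / 2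

/-- The Legendre sequence `c` of period `p`. -/
def legc (p : ℕ) [Fact p.Prime] (t : ℕ) : ℤ :=
  if (t : ZMod p) = 0 then 1 else (1 - legendreSym p (t : ℤ)) / 2

/-- The Gray map `φ(a,e) = 2a - a(e-1) - (a-1)e`. -/
def gray (a e : ℤ) : ℤ := 2 * a - a * (e - 1) - (a - 1) * e

/-- Auxiliary: the quaternary sequence term. -/
def Faux (p : ℕ) [Fact p.Prime] (t : ℕ) : ℤ :=
  if t % 2 = 0 then gray (legb p t) (legc p t) else gray (legb p t) (1 - legc p t)

lemma gcd_add_mul_aux (a b k : ℤ) : Int.gcd (a + b * k) b = Int.gcd a b := by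
  apply Nat.dvd_antisymm
  · rw [← Int.natCast_dvd_natCast]
    refine Int.dvd_coe_gcd ?_ (Int.gcd_dvd_right _ _)
    have h1 : (↑(Int.gcd (a + b * k) b) : ℤ) ∣ a + b * k := Int.gcd_dvd_left _ _
    have h2 : (↑(Int.gcd (a + b * k) b) : ℤ) ∣ b := Int.gcd_dvd_right _ _
    have := h1.sub (h2.mul_right k); simpa using this
  · rw [← Int.natCast_dvd_natCast]
    refine Int.dvd_coe_gcd ?_ (Int.gcd_dvd_right _ _)
    exact (Int.gcd_dvd_left (a := a) (b := b)).add
      ((Int.gcd_dvd_right (a := a) (b := b)).mul_right k)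

lemma legb_add_period (p : ℕ) [Fact p.Prime] (t : ℕ) : legb p (p + t) = legb p t := by
  have hcast : ((p + t : ℕ) : ZMod p) = (t : ZMod p) := by push_cast; simp
  have hleg : legendreSym p ((p + t : ℕ) : ℤ) = legendreSym p (t : ℤ) := by
    rw [legendreSym.mod p ((p + t : ℕ) : ℤ), legendreSym.mod p (t : ℤ)]
    congr 1
    push_cast
    rw [add_comm]
    simpa using Int.add_mul_emod_self_left (a := (t : ℤ)) (b := (p : ℤ)) (c := 1)
  simp only [legb, hcast, hleg]

lemma legc_add_period (p : ℕ) [Fact p.Prime] (t : ℕ) : legc p (p + t) = legc p t := by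
  have hcast : ((p + t : ℕ) : ZMod p) = (t : ZMod p) := by push_cast; simp
  have hleg : legendreSym p ((p + t : ℕ) : ℤ) = legendreSym p (t : ℤ) := by
    rw [legendreSym.mod p ((p + t : ℕ) : ℤ), legendreSym.mod p (t : ℤ)]
    congr 1
    push_cast
    rw [add_comm]
    simpa using Int.add_mul_emod_self_left (a := (t : ℤ)) (b := (p : ℤ)) (c := 1)
  simp only [legc, hcast, hleg]

theorem stmt10 (p : ℕ) [Fact p.Prime] (h3 : p % 4 = 3) :
    Int.gcd
      (∑ t ∈ Finset.range (2 * p),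
        (if t % 2 = 0 then gray (legb p t) (legc p t)
          else gray (legb p t) (1 - legc p t)) * 4 ^ t)
      ((4:ℤ) ^ p + 1) = if 5 ∣ p - 2 then 5 else 1 := by
  have hp : p.Prime := Fact.out
  have hp2 : p % 2 = 1 := by omega
  have hp3 : 3 ≤ p := by
    rcases hp.two_le.lt_or_eq with h | h <;> omega
  have habs : (∑ t ∈ Finset.range (2 * p),
        (if t % 2 = 0 then gray (legb p t) (legc p t)
          else gray (legb p t) (1 - legc p t)) * 4 ^ t)
      = ∑ t ∈ Finset.range (2 * p), Faux p t * 4 ^ t := rfl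
  rw [habs]
  set S : ℤ := ∑ t ∈ Finset.range p, (-4 : ℤ) ^ t with hS
  -- geometric sum identity
  have hgeom : 5 * S = (4:ℤ) ^ p + 1 := by
    have hgs := geom_sum_mul (-4 : ℤ) p
    have hodd : Odd p := Nat.odd_iff.mpr hp2
    rw [hodd.neg_pow] at hgs
    rw [hS]; linarith [hgs]
  -- key pointwise lemma
  have hkey : ∀ t ∈ Finset.range p,
      (Faux p t - Faux p (p + t)) * 4 ^ t + (-4 : ℤ) ^ t = if t = 0 then 2 else 0 := by
    intro t ht
    rw [Finset.mem_range] at ht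
    by_cases ht0 : t = 0
    · subst ht0
      have hc0 : ((0 : ℕ) : ZMod p) = 0 := by norm_num
      have hcp0 : ((p + 0 : ℕ) : ZMod p) = 0 := by
        simp [ZMod.natCast_self]
      rw [if_pos rfl]
      have e1 : legb p 0 = 0 := by simp [legb]
      have e2 : legc p 0 = 1 := by simp [legc]
      have e3 : legb p p = 0 := by simp [legb, ZMod.natCast_self]
      have e4 : legc p p = 1 := by simp [legc, ZMod.natCast_self]
      simp only [Faux, Nat.add_zero, hp2, e1, e2, e3, e4]
      norm_num [gray]
    · rw [if_neg ht0]
      have htz : (t : ZMod p) ≠ 0 := by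
        intro h0
        rw [ZMod.natCast_eq_zero_iff] at h0
        have := Nat.le_of_dvd (by omega) h0
        omega
      have htzi : ((t : ℤ) : ZMod p) ≠ 0 := by exact_mod_cast htz
      have hL := legendreSym.eq_one_or_neg_one p htzi
      have hb : legb p t = (1 - legendreSym p (t : ℤ)) / 2 := by simp [legb, htz]
      have hc : legc p t = (1 - legendreSym p (t : ℤ)) / 2 := by simp [legc, htz]
      have hbp : legb p (p + t) = legb p t := legb_add_period p t
      have hcp : legc p (p + t) = legc p t := legc_add_period p t
      have hneg : (-4 : ℤ) ^ t = (-1) ^ t * 4 ^ t := by rw [neg_pow]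
      simp only [Faux, hbp, hcp, hb, hc]
      rcases hL with hL | hL <;> rcases Nat.even_or_odd t with hpar | hpar
      · have h2t := Nat.even_iff.mp hpar
        rw [if_pos h2t, if_neg (by omega : ¬ (p + t) % 2 = 0), hneg,
          hpar.neg_one_pow, hL]
        norm_num [gray]
      · have h2t := Nat.odd_iff.mp hpar
        rw [if_neg (by omega : ¬ t % 2 = 0), if_pos (by omega : (p + t) % 2 = 0), hneg,
          hpar.neg_one_pow, hL]
        norm_num [gray]
      · have h2t := Nat.even_iff.mp hpar
        rw [if_pos h2t, if_neg (by omega : ¬ (p + t) % 2 = 0), hneg,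
          hpar.neg_one_pow, hL]
        norm_num [gray]
      · have h2t := Nat.odd_iff.mp hpar
        rw [if_neg (by omega : ¬ t % 2 = 0), if_pos (by omega : (p + t) % 2 = 0), hneg,
          hpar.neg_one_pow, hL]
        norm_num [gray]
  -- the sum reduction
  have hsplit : (∑ t ∈ Finset.range (2 * p), Faux p t * 4 ^ t)
      = (2 - S) + ((4:ℤ) ^ p + 1) * (∑ t ∈ Finset.range p, Faux p (p + t) * 4 ^ t) := by
    have h2p : 2 * p = p + p := by ring
    rw [h2p, Finset.sum_range_add]
    have hsum2 : ∑ t ∈ Finset.range p, Faux p (p + t) * 4 ^ (p + t)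
        = ∑ t ∈ Finset.range p,
            ((- (Faux p (p + t) * 4 ^ t)) + ((4:ℤ) ^ p + 1) * (Faux p (p + t) * 4 ^ t)) := by
      apply Finset.sum_congr rfl
      intro t _
      rw [pow_add]; ring
    rw [hsum2, Finset.sum_add_distrib, ← Finset.mul_sum, Finset.sum_neg_distrib]
    have hmain : (∑ t ∈ Finset.range p, Faux p t * 4 ^ t)
        - (∑ t ∈ Finset.range p, Faux p (p + t) * 4 ^ t) = 2 - S := by
      have hcon : (∑ t ∈ Finset.range p,
            ((Faux p t - Faux p (p + t)) * 4 ^ t + (-4 : ℤ) ^ t))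
          = ∑ t ∈ Finset.range p, (if t = 0 then (2:ℤ) else 0) :=
        Finset.sum_congr rfl hkey
      rw [Finset.sum_add_distrib] at hcon
      have h0 : (∑ t ∈ Finset.range p, (if t = 0 then (2:ℤ) else 0)) = 2 := by
        rw [Finset.sum_ite_eq' (Finset.range p) 0 (fun _ => (2:ℤ)),
          if_pos (Finset.mem_range.mpr (by omega))]
      have hsub : (∑ t ∈ Finset.range p, (Faux p t - Faux p (p + t)) * 4 ^ t)
          = (∑ t ∈ Finset.range p, Faux p t * 4 ^ t)
            - ∑ t ∈ Finset.range p, Faux p (p + t) * 4 ^ t := by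
        rw [← Finset.sum_sub_distrib]
        apply Finset.sum_congr rfl; intro t _; ring
      rw [h0, hsub, ← hS] at hcon
      linarith
    linarith
  rw [hsplit, gcd_add_mul_aux]
  -- now: Int.gcd (2 - S) (4^p + 1), with 5 * S = 4^p + 1
  have hNodd : ¬ (2:ℤ) ∣ (4:ℤ) ^ p + 1 := by
    have h2 : (2:ℤ) ∣ (4:ℤ) ^ p := dvd_pow (by norm_num) (by omega)
    omega
  set d : ℕ := Int.gcd (2 - S) ((4:ℤ) ^ p + 1) with hd
  have hdvd1 : (d : ℤ) ∣ 2 - S := Int.gcd_dvd_left _ _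
  have hdvd2 : (d : ℤ) ∣ (4:ℤ) ^ p + 1 := Int.gcd_dvd_right _ _
  have hd10 : (d : ℤ) ∣ 10 := by
    have h5 : (d : ℤ) ∣ 5 * (2 - S) := hdvd1.mul_left 5
    have h := h5.add hdvd2
    rwa [show 5 * (2 - S) + ((4:ℤ) ^ p + 1) = 10 from by linarith [hgeom]] at h
  have hd10' : d ∣ 10 := by
    rwa [show (10:ℤ) = ((10:ℕ):ℤ) from by norm_num, Int.natCast_dvd_natCast] at hd10
  have hdodd : ¬ 2 ∣ d := by
    intro h
    exact hNodd (dvd_trans (by exact_mod_cast h) hdvd2)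
  have hd15 : d = 1 ∨ d = 5 := by
    have hdle : d ≤ 10 := Nat.le_of_dvd (by norm_num) hd10'
    interval_cases d <;> revert hd10' hdodd <;> decide
  -- condition: 5 ∣ 2 - S ↔ 5 ∣ p - 2
  have hcond : (5:ℤ) ∣ (2 - S) ↔ 5 ∣ p - 2 := by
    have h1 : (5:ℤ) ∣ (2 - S) ↔ (25:ℤ) ∣ (4:ℤ) ^ p - 9 := by omega
    have h2 : (25:ℤ) ∣ (4:ℤ) ^ p - 9 ↔ p % 10 = 7 := by
      rw [show (25:ℤ) = ((25:ℕ):ℤ) from by norm_num,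
        ← ZMod.intCast_zmod_eq_zero_iff_dvd]
      push_cast
      have hdecomp : p = 10 * (p / 10) + p % 10 := (Nat.div_add_mod p 10).symm
      have h4p : (4 : ZMod 25) ^ p = 4 ^ (p % 10) := by
        conv_lhs => rw [hdecomp]
        rw [pow_add, pow_mul, show (4 : ZMod 25) ^ 10 = 1 from by decide, one_pow, one_mul]
      rw [h4p]
      have hlt : p % 10 < 10 := Nat.mod_lt _ (by norm_num)
      obtain ⟨r, hrlt, hreq⟩ : ∃ r, r < 10 ∧ p % 10 = r := ⟨p % 10, hlt, rfl⟩
      rw [hreq]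
      interval_cases r <;> constructor <;> intro hx <;> revert hx <;> decide
    rw [h1, h2]
    omega
  rcases hd15 with h1 | h5
  · rw [h1, if_neg]
    intro hdvd
    rw [← hcond] at hdvd
    have h5d : (5:ℤ) ∣ (d:ℤ) := by
      rw [hd]
      exact Int.dvd_coe_gcd hdvd ⟨S, by linarith [hgeom]⟩
    rw [h1] at h5d; norm_num at h5d
  · rw [h5, if_pos]
    rw [← hcond]
    rw [h5] at hdvd1
    exact_mod_cast hdvd1
end

section
/- Let p be a prime with p ≡ 3 (mod 4) and g^2 the quaternary sequence of period 2p from the Kim et al. construction. Then the 4-adic complexity Φ_4(g^2) equals log_4((4^{2p}-1)/5) if 5 | (p-2), and log_4(4^{2p}-1) otherwise; equivalently gcd(4^{2p}-1, ∑_{t=0}^{2p-1} g^2_t·4^t) = 5 if 5|(p-2) and 1 otherwise. -/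
open Finset

lemma sum_range_two_mul {M : Type*} [AddCommMonoid M] (n : ℕ) (f : ℕ → M) :
    ∑ t ∈ range (2 * n), f t = ∑ s ∈ range n, (f (2 * s) + f (2 * s + 1)) := by
  induction n with
  | zero => simp
  | succ n ih =>
    have h : 2 * (n + 1) = (2 * n + 1) + 1 := by ring
    rw [h, sum_range_succ, sum_range_succ, ih, sum_range_succ, add_assoc]

lemma sum_zmod (p : ℕ) [NeZero p] {M : Type*} [AddCommMonoid M] (f : ZMod p → M) :
    ∑ t ∈ range p, f (t : ZMod p) = ∑ a : ZMod p, f a := by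
  refine Finset.sum_nbij' (fun t => (t : ZMod p)) (fun a => a.val) ?_ ?_ ?_ ?_ ?_ <;>
    intros <;>
    simp_all [ZMod.natCast_rightInverse _, ZMod.val_cast_of_lt, ZMod.val_lt,
      Finset.mem_range, Nat.mod_eq_of_lt]

lemma leg_zero_of (p : ℕ) [Fact p.Prime] (t : ℕ) (h : (t : ZMod p) = 0) :
    legendreSym p (t : ℤ) = 0 := by
  rw [legendreSym.eq_zero_iff]; exact_mod_cast h

lemma leg_period (p : ℕ) [Fact p.Prime] (t : ℕ) :
    legendreSym p ((p + t : ℕ) : ℤ) = legendreSym p (t : ℤ) := by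
  have : (((p + t : ℕ) : ℤ) : ZMod p) = ((t : ℕ) : ZMod p) := by push_cast; simp
  simp only [legendreSym, this]; norm_cast

lemma leg_sum_zero (p : ℕ) [Fact p.Prime] (hp3 : p % 4 = 3) :
    ∑ t ∈ range p, legendreSym p (t : ℤ) = 0 := by
  haveI : NeZero p := ⟨(Fact.out : p.Prime).ne_zero⟩
  have h : ∀ t : ℕ, legendreSym p (t : ℤ) = quadraticChar (ZMod p) ((t : ZMod p)) := by
    intro t
    simp only [legendreSym]
    norm_cast
  simp only [h]
  rw [sum_zmod p (fun a => quadraticChar (ZMod p) a)]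
  exact quadraticChar_sum_zero (by rw [ZMod.ringChar_zmod_n]; omega)

lemma term_eq (p : ℕ) [Fact p.Prime] (hp3 : p % 4 = 3) {t : ℕ} (ht : t < 2 * p) :
    (if t % 2 = 0 then gray (legb p t) (legc p t)
        else gray (legb p t) (1 - legc p t))
      = 1 + ((t % 2 : ℕ) : ℤ) - legendreSym p (t : ℤ) - (if t = p then 2 else 0) := by
  have hpodd : p % 2 = 1 := Nat.odd_of_mod_four_eq_three hp3
  have hp2 : 2 ≤ p := (Fact.out : p.Prime).two_le
  by_cases h0 : (t : ZMod p) = 0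
  · have hdvd : p ∣ t := (ZMod.natCast_eq_zero_iff t p).mp h0
    have hleg : legendreSym p (t : ℤ) = 0 := leg_zero_of p t h0
    have ht0 : t = 0 ∨ t = p := by
      obtain ⟨k, rfl⟩ := hdvd
      have hk : k ≤ 1 := by nlinarith
      interval_cases k
      · left; ring
      · right; ring
    rcases ht0 with h | h
    · subst h
      simp [legb, legc, gray, hleg]
      rw [if_neg (show ¬ (0 = p) by omega)]
      ring
    · have hne : ¬ t % 2 = 0 := by omega
      simp [legb, legc, gray, h0, hleg, hne, h, hpodd]
      exact h ▸ hleg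
  · have hne : t ≠ p := by
      intro h; apply h0; rw [h]; exact_mod_cast ZMod.natCast_self p
    have hleg := legendreSym.eq_one_or_neg_one (p := p) (a := (t : ℤ))
      (by exact_mod_cast h0)
    have h2 : t % 2 = 0 ∨ t % 2 = 1 := by omega
    rcases hleg with hl | hl <;> rcases h2 with he | he <;>
      simp [legb, legc, gray, h0, hl, hne, he] <;> ring

lemma G_eq (p : ℕ) [Fact p.Prime] (hp3 : p % 4 = 3) :
    ∑ t ∈ range (2 * p), (if t % 2 = 0 then gray (legb p t) (legc p t)
        else gray (legb p t) (1 - legc p t)) * 4 ^ t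
    = (∑ t ∈ range (2 * p), 4 ^ t) + (∑ s ∈ range p, 4 ^ (2 * s + 1))
      - (1 + 4 ^ p) * (∑ t ∈ range p, legendreSym p (t : ℤ) * 4 ^ t) - 2 * 4 ^ p := by
  have hp2 : 2 ≤ p := (Fact.out : p.Prime).two_le
  have step : ∀ t ∈ range (2 * p),
      (if t % 2 = 0 then gray (legb p t) (legc p t)
        else gray (legb p t) (1 - legc p t)) * 4 ^ t
      = 4 ^ t + ((t % 2 : ℕ) : ℤ) * 4 ^ t - legendreSym p (t : ℤ) * 4 ^ t
          - (if t = p then (2:ℤ) else 0) * 4 ^ t := by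
    intro t ht
    rw [term_eq p hp3 (mem_range.mp ht)]
    ring
  rw [sum_congr rfl step]
  simp only [Finset.sum_sub_distrib, Finset.sum_add_distrib]
  have e1 : ∑ t ∈ range (2 * p), ((t % 2 : ℕ) : ℤ) * 4 ^ t
      = ∑ s ∈ range p, 4 ^ (2 * s + 1) := by
    rw [sum_range_two_mul]
    refine sum_congr rfl fun s _ => ?_
    simp [Nat.mul_mod_right, Nat.add_mod]
  have e2 : ∑ t ∈ range (2 * p), legendreSym p (t : ℤ) * 4 ^ t
      = (1 + 4 ^ p) * ∑ t ∈ range p, legendreSym p (t : ℤ) * 4 ^ t := by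
    have h2p : 2 * p = p + p := by ring
    rw [h2p, sum_range_add, add_mul, one_mul, mul_sum]
    congr 1
    refine sum_congr rfl fun t _ => ?_
    rw [leg_period, pow_add]
    ring
  have e3 : ∑ t ∈ range (2 * p), (if t = p then (2:ℤ) else 0) * 4 ^ t = 2 * 4 ^ p := by
    rw [Finset.sum_eq_single p (fun b _ hb => by simp [hb])
      (fun h => absurd (mem_range.mpr (by omega)) h)]
    simp
  rw [e1, e2, e3]

lemma key_dvd (p q : ℕ) [Fact p.Prime] (hp3 : p % 4 = 3) (hq : q.Prime)
    (h1 : (q : ℤ) ∣ 4 ^ (2 * p) - 1)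
    (h2 : (q : ℤ) ∣ (∑ t ∈ range (2 * p), 4 ^ t) + (∑ s ∈ range p, (4:ℤ) ^ (2 * s + 1))
      - (1 + 4 ^ p) * (∑ t ∈ range p, legendreSym p (t : ℤ) * 4 ^ t) - 2 * 4 ^ p)
    (hls : ∑ t ∈ range p, legendreSym p (t : ℤ) = 0) :
    q = 5 ∧ 5 ∣ p - 2 := by
  haveI : Fact q.Prime := ⟨hq⟩
  haveI : NeZero p := ⟨(Fact.out : p.Prime).ne_zero⟩
  have hp2 : 2 ≤ p := (Fact.out : p.Prime).two_le
  have hpodd : p % 2 = 1 := Nat.odd_of_mod_four_eq_three hp3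
  -- q is odd
  have hq2 : q ≠ 2 := by
    intro h; subst h
    have heven : Even ((4:ℤ) ^ (2 * p)) :=
      Int.even_pow.mpr ⟨⟨2, by norm_num⟩, by omega⟩
    have hodd : Odd ((4:ℤ) ^ (2 * p) - 1) := heven.sub_odd odd_one
    obtain ⟨k, hk⟩ := hodd
    obtain ⟨m, hm⟩ := h1
    omega
  have h2K : (2 : ZMod q) ≠ 0 := by
    intro h
    exact hq2 ((Nat.prime_dvd_prime_iff_eq hq Nat.prime_two).mp
      ((ZMod.natCast_eq_zero_iff 2 q).mp (by exact_mod_cast h)))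
  -- cast hypotheses to ZMod q
  have hx2p : (4 : ZMod q) ^ (2 * p) = 1 := by
    have := (ZMod.intCast_zmod_eq_zero_iff_dvd _ q).mpr h1
    push_cast at this
    linear_combination this
  have hmain : (∑ t ∈ range (2 * p), (4 : ZMod q) ^ t)
      + (∑ s ∈ range p, (4 : ZMod q) ^ (2 * s + 1))
      - (1 + 4 ^ p) * (∑ t ∈ range p, ((legendreSym p (t : ℤ) : ℤ) : ZMod q) * 4 ^ t)
      - 2 * 4 ^ p = 0 := by
    have := (ZMod.intCast_zmod_eq_zero_iff_dvd _ q).mpr h2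
    push_cast at this
    linear_combination this
  set T : ZMod q := ∑ t ∈ range p, ((legendreSym p (t : ℤ) : ℤ) : ZMod q) * 4 ^ t with hT
  -- square split
  have hsq : ((4 : ZMod q) ^ p - 1) * ((4 : ZMod q) ^ p + 1) = 0 := by
    rw [two_mul, pow_add] at hx2p
    linear_combination hx2p
  -- helper: sums vanish when 4 ≠ ±1
  have hvanish : (4 : ZMod q) ≠ 1 → (4 : ZMod q) ≠ -1 →
      (∑ t ∈ range (2 * p), (4 : ZMod q) ^ t) = 0 ∧
      (∑ s ∈ range p, (4 : ZMod q) ^ (2 * s + 1)) = 0 := by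
    intro hne1 hnem1
    constructor
    · have h := geom_sum_mul (4 : ZMod q) (2 * p)
      rw [hx2p, sub_self] at h
      rcases mul_eq_zero.mp h with h | h
      · exact h
      · exact absurd (by linear_combination h) hne1
    · have hB : (∑ s ∈ range p, (4 : ZMod q) ^ (2 * s + 1))
          = 4 * ∑ s ∈ range p, ((4 : ZMod q) ^ 2) ^ s := by
        rw [mul_sum]
        refine sum_congr rfl fun s _ => ?_
        rw [← pow_mul, pow_succ, mul_comm]
      have h := geom_sum_mul ((4 : ZMod q) ^ 2) p
      rw [← pow_mul] at h
      rw [hx2p, sub_self] at h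
      rcases mul_eq_zero.mp h with h | h
      · rw [hB, h, mul_zero]
      · exfalso
        have : ((4 : ZMod q) - 1) * ((4 : ZMod q) + 1) = 0 := by linear_combination h
        rcases mul_eq_zero.mp this with h' | h'
        · exact hne1 (by linear_combination h')
        · exact hnem1 (by linear_combination h')
  rcases mul_eq_zero.mp hsq with hxp | hxp
  · -- 4^p = 1
    have hxp : (4 : ZMod q) ^ p = 1 := by linear_combination hxp
    by_cases hx1 : (4 : ZMod q) = 1
    · -- q = 3, contradiction
      exfalso
      have hq3 : q = 3 := by
        have h3 : ((3 : ℕ) : ZMod q) = 0 := by push_cast; linear_combination hx1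
        exact (Nat.prime_dvd_prime_iff_eq hq (by norm_num)).mp
          ((ZMod.natCast_eq_zero_iff 3 q).mp h3)
      have hT0 : T = 0 := by
        rw [hT]
        rw [show (∑ t ∈ range p, ((legendreSym p (t : ℤ) : ℤ) : ZMod q) * 4 ^ t)
            = ∑ t ∈ range p, ((legendreSym p (t : ℤ) : ℤ) : ZMod q) from
          sum_congr rfl fun t _ => by rw [hx1, one_pow, mul_one]]
        rw [← Int.cast_sum, hls, Int.cast_zero]
      rw [hx1, hT0] at hmain
      simp only [one_pow, mul_one, mul_zero, sub_zero] at hmain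
      rw [Finset.sum_const, Finset.sum_const, card_range, card_range] at hmain
      simp only [nsmul_eq_mul, mul_one] at hmain
      have h3K : ((3 : ℕ) : ZMod q) = 0 :=
        (ZMod.natCast_eq_zero_iff 3 q).mpr (show q ∣ 3 by rw [hq3])
      have h2 : (2 : ZMod q) = 0 := by
        push_cast at hmain h3K
        linear_combination -hmain + (p : ZMod q) * h3K
      exact h2K h2
    · -- Gauss sum case: contradiction
      exfalso
      have hxm1 : (4 : ZMod q) ≠ -1 := by
        intro h
        rw [h, (Nat.odd_iff.mpr hpodd).neg_one_pow] at hxp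
        exact h2K (by linear_combination -hxp)
      obtain ⟨hA, hB⟩ := hvanish hx1 hxm1
      rw [hA, hB, hxp] at hmain
      have hTm1 : T = -1 := by
        have h20 : (2 : ZMod q) * (T + 1) = 0 := by
          linear_combination -hmain
        rcases mul_eq_zero.mp h20 with h | h
        · exact absurd h h2K
        · linear_combination h
      -- Gauss sum machinery
      have hx0 : (4 : ZMod q) ≠ 0 := by
        intro h
        rw [h, zero_pow (by omega : p ≠ 0)] at hxp
        exact one_ne_zero hxp.symm
      have horder : orderOf (4 : ZMod q) = p := orderOf_eq_prime hxp hx1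
      have hdvd1 : p ∣ q - 1 := by
        rw [← horder]
        exact orderOf_dvd_of_pow_eq_one (ZMod.pow_card_sub_one_eq_one hx0)
      have hprim : IsPrimitiveRoot (4 : ZMod q) p := horder ▸ IsPrimitiveRoot.orderOf (4 : ZMod q)
      set ψ : AddChar (ZMod p) (ZMod q) := AddChar.zmodChar p hxp with hψ
      have hψprim : ψ.IsPrimitive :=
        AddChar.zmodChar_primitive_of_primitive_root p hprim
      set χ' : MulChar (ZMod p) (ZMod q) :=
        (quadraticChar (ZMod p)).ringHomComp (Int.castRingHom (ZMod q)) with hχ'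
      have hrc : ringChar (ZMod p) ≠ 2 := by rw [ZMod.ringChar_zmod_n]; omega
      have hχ1 : χ' ≠ 1 := by
        rw [MulChar.ne_one_iff]
        obtain ⟨a, ha⟩ := FiniteField.exists_nonsquare (F := ZMod p) hrc
        have ha0 : a ≠ 0 := fun h => ha ⟨0, by simp [h]⟩
        refine ⟨(isUnit_iff_ne_zero.mpr ha0).unit, ?_⟩
        have : χ' a = ((-1 : ℤ) : ZMod q) := by
          rw [hχ']
          simp only [MulChar.ringHomComp_apply]
          rw [(quadraticChar_neg_one_iff_not_isSquare).mpr ha]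
          simp
        rw [IsUnit.unit_spec, this]
        intro h
        push_cast at h
        exact h2K (by linear_combination -h)
      have hχq : χ'.IsQuadratic := (quadraticChar_isQuadratic (ZMod p)).comp _
      have hgs := gaussSum_sq hχ1 hχq hψprim
      have hcard : (Fintype.card (ZMod p) : ZMod q) = (p : ZMod q) := by rw [ZMod.card]
      have hχm1 : χ' (-1) = -1 := by
        have h1' := legendreSym.at_neg_one (p := p) (by omega)
        rw [ZMod.χ₄_nat_three_mod_four hp3] at h1'
        have : quadraticChar (ZMod p) (-1) = -1 := by
          simpa [legendreSym] using h1'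
        rw [hχ']
        simp only [MulChar.ringHomComp_apply, this]
        simp
      have hTgauss : T = gaussSum χ' ψ := by
        rw [gaussSum, hT]
        rw [show (∑ t ∈ range p, ((legendreSym p (t : ℤ) : ℤ) : ZMod q) * 4 ^ t)
            = ∑ t ∈ range p,
              (fun a : ZMod p => χ' a * ψ a) ((t : ZMod p)) from ?_]
        · exact sum_zmod p (fun a : ZMod p => χ' a * ψ a)
        refine sum_congr rfl fun t ht => ?_
        have hval : ((t : ZMod p)).val = t := ZMod.val_cast_of_lt (mem_range.mp ht)
        rw [hχ', hψ]
        simp only [MulChar.ringHomComp_apply, AddChar.zmodChar_apply, hval]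
        congr 2
        simp only [legendreSym]
        norm_cast
      rw [← hTgauss, hTm1, hcard, hχm1] at hgs
      -- hgs : (-1)^2 = -1 * p
      have hpm1 : ((p + 1 : ℕ) : ZMod q) = 0 := by push_cast; linear_combination hgs
      have hqdvd : q ∣ p + 1 :=
        (ZMod.natCast_eq_zero_iff (p + 1) q).mp hpm1
      have hqge : p + 1 ≤ q := by
        have h1le : 1 ≤ q - 1 := by have := hq.two_le; omega
        have := Nat.le_of_dvd (by omega) hdvd1
        omega
      have hqeq : q = p + 1 := Nat.le_antisymm (Nat.le_of_dvd (by omega) hqdvd) hqge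
      have : q % 2 = 0 := by omega
      exact hq2 ((Nat.Prime.even_iff hq).mp (Nat.even_iff.mpr this))
  · -- 4^p = -1
    have hxp : (4 : ZMod q) ^ p = -1 := by linear_combination hxp
    by_cases hq5 : q = 5
    · subst hq5
      refine ⟨rfl, ?_⟩
      have hx : (4 : ZMod 5) = -1 := by
        have h5 : ((5 : ℕ) : ZMod 5) = 0 := ZMod.natCast_self 5
        push_cast at h5
        linear_combination h5
      have hA : (∑ t ∈ range (2 * p), (4 : ZMod 5) ^ t) = 0 := by
        rw [sum_range_two_mul]
        refine Finset.sum_eq_zero fun s _ => ?_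
        simp [hx, pow_add, pow_mul]
      have hB : (∑ s ∈ range p, (4 : ZMod 5) ^ (2 * s + 1)) = -(p : ZMod 5) := by
        have hs : ∀ s : ℕ, (4 : ZMod 5) ^ (2 * s + 1) = -1 := fun s => by
          simp [hx, pow_add, pow_mul]
        rw [Finset.sum_congr rfl fun s _ => hs s, Finset.sum_const, card_range]
        simp
      rw [hA, hB, hxp] at hmain
      have hp2K : ((p : ℕ) : ZMod 5) = 2 := by linear_combination -hmain
      have : ((p - 2 : ℕ) : ZMod 5) = 0 := by
        push_cast [Nat.cast_sub hp2]
        rw [hp2K]; ring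
      exact_mod_cast (ZMod.natCast_eq_zero_iff (p - 2) 5).mp this
    · exfalso
      have hxm1 : (4 : ZMod q) ≠ -1 := by
        intro h
        have h5 : ((5 : ℕ) : ZMod q) = 0 := by push_cast; linear_combination h
        exact hq5 ((Nat.prime_dvd_prime_iff_eq hq (by norm_num)).mp
          ((ZMod.natCast_eq_zero_iff 5 q).mp h5))
      have hx1 : (4 : ZMod q) ≠ 1 := by
        intro h
        rw [h, one_pow] at hxp
        exact h2K (by linear_combination hxp)
      obtain ⟨hA, hB⟩ := hvanish hx1 hxm1
      rw [hA, hB, hxp] at hmain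
      exact h2K (by linear_combination hmain)

lemma five_dvd_N (p : ℕ) : (5:ℤ) ∣ 4 ^ (2 * p) - 1 := by
  have h : (((4 ^ (2 * p) - 1 : ℤ) : ZMod 5)) = 0 := by
    push_cast
    rw [pow_mul, show ((4:ZMod 5) ^ 2) = 1 by decide, one_pow]
    ring
  exact_mod_cast (ZMod.intCast_zmod_eq_zero_iff_dvd _ 5).mp h

lemma five_dvd_G (p : ℕ) [Fact p.Prime] (hp3 : p % 4 = 3) (h5 : 5 ∣ p - 2) :
    (5:ℤ) ∣ (∑ t ∈ range (2 * p), 4 ^ t) + (∑ s ∈ range p, (4:ℤ) ^ (2 * s + 1))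
      - (1 + 4 ^ p) * (∑ t ∈ range p, legendreSym p (t : ℤ) * 4 ^ t) - 2 * 4 ^ p := by
  have hp2 : 2 ≤ p := (Fact.out : p.Prime).two_le
  have hpodd : p % 2 = 1 := Nat.odd_of_mod_four_eq_three hp3
  suffices h : ((((∑ t ∈ range (2 * p), 4 ^ t) + (∑ s ∈ range p, (4:ℤ) ^ (2 * s + 1))
      - (1 + 4 ^ p) * (∑ t ∈ range p, legendreSym p (t : ℤ) * 4 ^ t) - 2 * 4 ^ p : ℤ)) : ZMod 5) = 0 by
    exact_mod_cast (ZMod.intCast_zmod_eq_zero_iff_dvd _ 5).mp h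
  push_cast
  have hx : (4 : ZMod 5) = -1 := by decide
  have hxp : (4 : ZMod 5) ^ p = -1 := by
    rw [hx, (Nat.odd_iff.mpr hpodd).neg_one_pow]
  have hA : (∑ t ∈ range (2 * p), (4 : ZMod 5) ^ t) = 0 := by
    rw [sum_range_two_mul]
    refine Finset.sum_eq_zero fun s _ => ?_
    simp [hx, pow_add, pow_mul]
  have hB : (∑ s ∈ range p, (4 : ZMod 5) ^ (2 * s + 1)) = -(p : ZMod 5) := by
    have hs : ∀ s : ℕ, (4 : ZMod 5) ^ (2 * s + 1) = -1 := fun s => by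
      simp [hx, pow_add, pow_mul]
    rw [Finset.sum_congr rfl fun s _ => hs s, Finset.sum_const, card_range]
    simp
  rw [hA, hB, hxp]
  have hp5 : ((p : ℕ) : ZMod 5) = 2 := by
    obtain ⟨k, hk⟩ := h5
    have hpk : p = 5 * k + 2 := by omega
    rw [hpk]
    push_cast
    rw [show ((5:ZMod 5)) = 0 by decide]
    ring
  rw [hp5]
  ring

lemma not_25_dvd (p : ℕ) (hp2 : 2 ≤ p) (h5 : 5 ∣ p - 2) :
    ¬ (25:ℤ) ∣ 4 ^ (2 * p) - 1 := by
  intro h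
  have h0 : ((4 : ZMod 25)) ^ (2 * p) - 1 = 0 := by
    have := (ZMod.intCast_zmod_eq_zero_iff_dvd _ 25).mpr h
    push_cast at this
    linear_combination this
  obtain ⟨k, hk⟩ := h5
  have hpk : 2 * p = 10 * k + 4 := by omega
  rw [hpk, pow_add, pow_mul, show ((4:ZMod 25) ^ 10) = 1 by decide, one_pow,
    show ((4:ZMod 25) ^ 4) = 6 by decide, one_mul] at h0
  have : (5 : ZMod 25) = 0 := by linear_combination h0
  have h25 : (25:ℕ) ∣ 5 := by
    exact_mod_cast (ZMod.natCast_eq_zero_iff 5 25).mp (by exact_mod_cast this)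
  omega

theorem stmt11 (p : ℕ) [Fact p.Prime] (h3 : p % 4 = 3)
    (G : ℤ)
    (hG : G = ∑ t ∈ Finset.range (2 * p),
      (if t % 2 = 0 then gray (legb p t) (legc p t)
        else gray (legb p t) (1 - legc p t)) * 4 ^ t) :
    Int.gcd ((4:ℤ) ^ (2 * p) - 1) G = (if 5 ∣ p - 2 then 5 else 1) ∧
    Real.logb 4 (((4:ℝ) ^ (2 * p) - 1) / (Int.gcd ((4:ℤ) ^ (2 * p) - 1) G : ℝ)) =
      (if 5 ∣ p - 2 then Real.logb 4 (((4:ℝ) ^ (2 * p) - 1) / 5)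
        else Real.logb 4 ((4:ℝ) ^ (2 * p) - 1)) := by
  have hp2 : 2 ≤ p := (Fact.out : p.Prime).two_le
  have hGsum := hG.trans (G_eq p h3)
  set N : ℤ := (4:ℤ) ^ (2 * p) - 1 with hN
  set d : ℕ := Int.gcd N G with hd
  have hNpos : 0 < N := by
    have : (1:ℤ) < 4 ^ (2 * p) := one_lt_pow₀ (by norm_num) (by omega)
    omega
  have hdne : d ≠ 0 := by
    intro h
    rw [hd, Int.gcd_eq_zero_iff] at h
    omega
  have hprime : ∀ r : ℕ, r.Prime → r ∣ d → r = 5 ∧ 5 ∣ p - 2 := by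
    intro r hr hrd
    have hr1 : (r:ℤ) ∣ N :=
      dvd_trans (Int.natCast_dvd_natCast.mpr hrd) (Int.gcd_dvd_left N G)
    have hr2 : (r:ℤ) ∣ G :=
      dvd_trans (Int.natCast_dvd_natCast.mpr hrd) (Int.gcd_dvd_right N G)
    rw [hGsum] at hr2
    exact key_dvd p r h3 hr hr1 hr2 (leg_sum_zero p h3)
  have hmain : d = if 5 ∣ p - 2 then 5 else 1 := by
    by_cases h5 : 5 ∣ p - 2
    · rw [if_pos h5]
      have h5d : 5 ∣ d := by
        have hN5 : (5:ℤ) ∣ N := five_dvd_N p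
        have hG5 : (5:ℤ) ∣ G := by rw [hGsum]; exact five_dvd_G p h3 h5
        have := Int.dvd_gcd hN5 hG5
        exact_mod_cast this
      have hd5pow : d = 5 ^ d.primeFactorsList.length :=
        Nat.eq_prime_pow_of_unique_prime_dvd hdne
          (fun hq hdvd => (hprime _ hq hdvd).1)
      have h25 : ¬ (25 ∣ d) := by
        intro h
        have h25N : (25:ℤ) ∣ N :=
          dvd_trans (Int.natCast_dvd_natCast.mpr h) (Int.gcd_dvd_left N G)
        exact not_25_dvd p hp2 h5 h25N
      have hlen : d.primeFactorsList.length = 1 := by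
        rcases Nat.lt_or_ge d.primeFactorsList.length 2 with h | h
        · have h0 : d.primeFactorsList.length ≠ 0 := by
            intro h0
            rw [hd5pow, h0, pow_zero] at h5d
            omega
          omega
        · exfalso
          apply h25
          rw [hd5pow]
          calc (25:ℕ) = 5 ^ 2 := by norm_num
          _ ∣ 5 ^ d.primeFactorsList.length := pow_dvd_pow 5 h
      rw [hd5pow, hlen, pow_one]
    · rw [if_neg h5]
      by_contra hne
      obtain ⟨r, hr, hrd⟩ := Nat.exists_prime_and_dvd hne
      exact h5 (hprime r hr hrd).2
  refine ⟨hmain, ?_⟩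
  rw [hmain]
  by_cases h5 : 5 ∣ p - 2
  · rw [if_pos h5, if_pos h5]
    norm_num
  · rw [if_neg h5, if_neg h5]
    norm_num
end
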